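/- In the single-copier model with degradation, the pulse-width variables satisfy the reduction: if w_{i} and v_{i} obey w_{i+1} = w_i + g(τ − v_i) − g(τ − w_i), v_{i+1} = v_i + g(τ − w_{i+1}) − g(τ − v_i), together with the constraint g(τ − w_i) − w_i = v_i holding at step i, then the constraint also holds at step i+1 (i.e., g(τ − w_{i+1}) − w_{i+1} = v_{i+1}), and v evolves by the one-dimensional map v_{i+1} = v_i + g(τ + v_i − g(τ − v_i)) − g(τ − v_i). -/
import Mathlib

/-- Reduction of the two-dimensional pulse-width map with degradation to a 1D
map: the constraint `g (τ - w) - w = v` is invariant under the evolution, and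
on the constraint manifold `v` evolves by
`v' = v + g (τ + v - g (τ - v)) - g (τ - v)`. -/
theorem stmt_14 (g : ℝ → ℝ) (τ : ℝ) (w v w' v' : ℝ)
    (hw' : w' = w + g (τ - v) - g (τ - w))
    (hv' : v' = v + g (τ - w') - g (τ - v))
    (hconstr : g (τ - w) - w = v) :
    g (τ - w') - w' = v' ∧ v' = v + g (τ + v - g (τ - v)) - g (τ - v) := by
  have hw'2 : w' = g (τ - v) - v := by rw [hw']; linarith
  have harg : τ - w' = τ + v - g (τ - v) := by rw [hw'2]; ring
  constructor
  · rw [hv', hw'2]; linarith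
  · rw [hv', harg]
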